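/- Let A = [a_{ij}] be an n×n real matrix with operator norm ‖A‖ (as an operator on Euclidean ℝ^n), and let ξ = (ξ_1, …, ξ_n) be a random vector with K := ‖ξ‖_{E_2} < ∞. Let C > 0 be a constant such that for every centered random variable η with ‖η‖_{ψ_1} < ∞ and every t with |t| ≤ 1/(C‖η‖_{ψ_1}), E exp(tη) ≤ exp(C² ‖η‖_{ψ_1}² t²). Then for every t ≥ 0, P(|ξᵀAξ − E(ξᵀAξ)| ≥ t) ≤ 2 exp(−min{ t² / (16 C² ‖A‖² K⁴), t / (4C ‖A‖ K²) }). -/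

import Mathlib

open MeasureTheory ENNReal

universe u

/-- The Luxemburg (ψ_1) norm of a real random variable:
`‖η‖_{ψ_1} = inf{K > 0 : E exp(|η/K|) ≤ 2}` (with value `∞` if no such `K` exists). -/
noncomputable def psi1Norm {Ω : Type*} [MeasurableSpace Ω] (μ : Measure Ω)
    (η : Ω → ℝ) : ℝ≥0∞ :=
  ⨅ (K : ℝ) (_ : 0 < K)
    (_ : ∫⁻ ω, ENNReal.ofReal (Real.exp (|η ω / K|)) ∂μ ≤ 2), ENNReal.ofReal K

/-- `‖ξ‖_{E_2} = inf{K > 0 : E exp(∑_i ξ_i² / K²) ≤ 2}`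
(with value `∞` if no such `K` exists). -/
noncomputable def e2Norm {Ω : Type*} [MeasurableSpace Ω] {n : ℕ} (μ : Measure Ω)
    (ξ : Fin n → Ω → ℝ) : ℝ≥0∞ :=
  ⨅ (K : ℝ) (_ : 0 < K)
    (_ : ∫⁻ ω, ENNReal.ofReal (Real.exp ((∑ i, ξ i ω ^ 2) / K ^ 2)) ∂μ ≤ 2),
    ENNReal.ofReal K

/-- The operator (spectral) norm of a matrix on Euclidean `ℝ^n`:
`‖A‖ = sup_{|x|₂ = 1} |Ax|₂`. -/
noncomputable def matOpNorm {n : ℕ} (A : Matrix (Fin n) (Fin n) ℝ) : ℝ :=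
  ⨆ (x : Fin n → ℝ) (_ : (∑ i, x i ^ 2) ^ ((1 : ℝ) / 2) = 1),
    (∑ i, A.mulVec x i ^ 2) ^ ((1 : ℝ) / 2)

lemma mulVec_sq_le {n : ℕ} (A : Matrix (Fin n) (Fin n) ℝ) (x : Fin n → ℝ) (i : Fin n) :
    A.mulVec x i ^ 2 ≤ (∑ j, A i j ^ 2) * ∑ j, x j ^ 2 := by
  have := Finset.sum_mul_sq_le_sq_mul_sq Finset.univ (fun j => A i j) x
  simpa [Matrix.mulVec, dotProduct] using this

lemma opnorm_unit {n : ℕ} (A : Matrix (Fin n) (Fin n) ℝ) (x : Fin n → ℝ)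
    (hx : (∑ i, x i ^ 2) ^ ((1:ℝ)/2) = 1) :
    (∑ i, A.mulVec x i ^ 2) ^ ((1:ℝ)/2) ≤ matOpNorm A := by
  set F : ℝ := Real.sqrt (∑ i, ∑ j, A i j ^ 2) with hF
  have hFnn : 0 ≤ F := Real.sqrt_nonneg _
  have hfrob : ∀ x : Fin n → ℝ, (∑ i, x i ^ 2) ^ ((1:ℝ)/2) = 1 →
      (∑ i, A.mulVec x i ^ 2) ^ ((1:ℝ)/2) ≤ F := by
    intro x hx
    have hx2 : ∑ i, x i ^ 2 = 1 := by
      have h0 : (0:ℝ) ≤ ∑ i, x i ^ 2 := Finset.sum_nonneg fun i _ => sq_nonneg _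
      nlinarith [Real.sq_sqrt h0, Real.sqrt_eq_rpow (∑ i, x i ^ 2), hx,
        Real.sqrt_nonneg (∑ i, x i ^ 2)]
    rw [← Real.sqrt_eq_rpow, hF]
    apply Real.sqrt_le_sqrt
    calc ∑ i, A.mulVec x i ^ 2 ≤ ∑ i, (∑ j, A i j ^ 2) * ∑ j, x j ^ 2 :=
          Finset.sum_le_sum fun i _ => mulVec_sq_le A x i
      _ = ∑ i, ∑ j, A i j ^ 2 := by rw [hx2]; simp
  have hbdd : BddAbove (Set.range fun x : Fin n → ℝ =>
      ⨆ (_ : (∑ i, x i ^ 2) ^ ((1:ℝ)/2) = 1), (∑ i, A.mulVec x i ^ 2) ^ ((1:ℝ)/2)) := by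
    refine ⟨F, ?_⟩
    rintro y ⟨x, rfl⟩
    by_cases hx : (∑ i, x i ^ 2) ^ ((1:ℝ)/2) = 1
    · refine le_trans (le_of_eq ?_) (hfrob x hx)
      exact ciSup_pos hx
    · refine le_trans (le_of_eq ?_) hFnn
      haveI : IsEmpty ((∑ i, x i ^ 2) ^ ((1:ℝ)/2) = 1) := ⟨fun h => hx h⟩
      exact Real.iSup_of_isEmpty _
  haveI : Nonempty ((∑ i, x i ^ 2) ^ ((1:ℝ)/2) = 1) := ⟨hx⟩
  exact le_trans ciSup_const.ge (le_ciSup hbdd x)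

lemma opnorm_apply {n : ℕ} (A : Matrix (Fin n) (Fin n) ℝ) (v : Fin n → ℝ) :
    Real.sqrt (∑ i, A.mulVec v i ^ 2) ≤ matOpNorm A * Real.sqrt (∑ i, v i ^ 2) := by
  set c : ℝ := Real.sqrt (∑ i, v i ^ 2) with hc
  have hcnn : 0 ≤ c := Real.sqrt_nonneg _
  have hsum : (0:ℝ) ≤ ∑ i, v i ^ 2 := Finset.sum_nonneg fun i _ => sq_nonneg _
  rcases eq_or_lt_of_le hcnn with h0 | hpos
  · -- c = 0, hence v = 0
    have hv : ∀ i, v i = 0 := by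
      intro i
      have hs : ∑ i, v i ^ 2 = 0 := by
        have := Real.sqrt_eq_zero hsum |>.mp h0.symm
        exact this
      have := Finset.sum_eq_zero_iff_of_nonneg (fun i _ => sq_nonneg (v i)) |>.mp hs i (Finset.mem_univ i)
      exact pow_eq_zero_iff (two_ne_zero) |>.mp this
    have : ∀ i, A.mulVec v i = 0 := by
      intro i; simp [Matrix.mulVec, dotProduct, hv]
    simp [this, ← h0]
  · set x : Fin n → ℝ := fun i => c⁻¹ * v i with hx
    have hc2 : c ^ 2 = ∑ i, v i ^ 2 := Real.sq_sqrt hsum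
    have hcne : c ≠ 0 := ne_of_gt hpos
    have hxsum : ∑ i, x i ^ 2 = 1 := by
      calc ∑ i, x i ^ 2 = c⁻¹ ^ 2 * ∑ i, v i ^ 2 := by
            simp [hx, mul_pow, Finset.mul_sum]
        _ = 1 := by rw [← hc2]; field_simp
    have hxunit : (∑ i, x i ^ 2) ^ ((1:ℝ)/2) = 1 := by rw [hxsum]; simp
    have hkey := opnorm_unit A x hxunit
    have hmv : ∀ i, A.mulVec x i = c⁻¹ * A.mulVec v i := by
      intro i
      simp only [hx, Matrix.mulVec, dotProduct, Finset.mul_sum]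
      exact Finset.sum_congr rfl fun j _ => by ring
    have hrw : (∑ i, A.mulVec x i ^ 2) = c⁻¹ ^ 2 * ∑ i, A.mulVec v i ^ 2 := by
      simp only [hmv, mul_pow, Finset.mul_sum]
    rw [hrw, ← Real.sqrt_eq_rpow] at hkey
    rw [Real.sqrt_mul (by positivity), Real.sqrt_sq (by positivity)] at hkey
    have : Real.sqrt (∑ i, A.mulVec v i ^ 2) ≤ c * matOpNorm A := by
      rw [inv_mul_le_iff₀ hpos] at hkey
      linarith [hkey]
    linarith [this]

lemma quad_bound {n : ℕ} (A : Matrix (Fin n) (Fin n) ℝ) (v : Fin n → ℝ) :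
    |∑ i, ∑ j, A i j * v i * v j| ≤ matOpNorm A * ∑ i, v i ^ 2 := by
  have hrw : ∑ i, ∑ j, A i j * v i * v j = ∑ i, v i * A.mulVec v i := by
    refine Finset.sum_congr rfl fun i _ => ?_
    simp only [Matrix.mulVec, dotProduct, Finset.mul_sum]
    exact Finset.sum_congr rfl fun j _ => by ring
  rw [hrw]
  have hs : (0:ℝ) ≤ ∑ i, v i ^ 2 := Finset.sum_nonneg fun i _ => sq_nonneg _
  have hcs := Finset.sum_mul_sq_le_sq_mul_sq Finset.univ v (A.mulVec v)
  have habs : |∑ i, v i * A.mulVec v i| ≤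
      Real.sqrt (∑ i, v i ^ 2) * Real.sqrt (∑ i, A.mulVec v i ^ 2) := by
    rw [← Real.sqrt_mul_self (abs_nonneg _), ← Real.sqrt_mul hs]
    apply Real.sqrt_le_sqrt
    calc |∑ i, v i * A.mulVec v i| * |∑ i, v i * A.mulVec v i|
        = (∑ i, v i * A.mulVec v i) ^ 2 := by rw [← abs_mul, ← sq, abs_sq]
      _ ≤ _ := hcs
  calc |∑ i, v i * A.mulVec v i|
      ≤ Real.sqrt (∑ i, v i ^ 2) * Real.sqrt (∑ i, A.mulVec v i ^ 2) := habs
    _ ≤ Real.sqrt (∑ i, v i ^ 2) * (matOpNorm A * Real.sqrt (∑ i, v i ^ 2)) := by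
        apply mul_le_mul_of_nonneg_left (opnorm_apply A v) (Real.sqrt_nonneg _)
    _ = matOpNorm A * (Real.sqrt (∑ i, v i ^ 2) * Real.sqrt (∑ i, v i ^ 2)) := by ring
    _ = matOpNorm A * ∑ i, v i ^ 2 := by rw [Real.mul_self_sqrt hs]

lemma e2_valid_gt {Ω : Type*} [MeasurableSpace Ω] (μ : Measure Ω) {n : ℕ}
    (ξ : Fin n → Ω → ℝ) (hfin : e2Norm μ ξ < ⊤) {K' : ℝ}
    (hK' : (e2Norm μ ξ).toReal < K') :
    ∫⁻ ω, ENNReal.ofReal (Real.exp ((∑ i, ξ i ω ^ 2) / K' ^ 2)) ∂μ ≤ 2 := by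
  have h1 : e2Norm μ ξ < ENNReal.ofReal K' := by
    rw [← ENNReal.ofReal_toReal hfin.ne]
    exact ENNReal.ofReal_lt_ofReal_iff (lt_of_le_of_lt ENNReal.toReal_nonneg hK') |>.mpr hK'
  rw [e2Norm] at h1
  rw [iInf_lt_iff] at h1
  obtain ⟨K'', h2⟩ := h1
  rw [iInf_lt_iff] at h2
  obtain ⟨hK''pos, h3⟩ := h2
  rw [iInf_lt_iff] at h3
  obtain ⟨hcond, h4⟩ := h3
  have hlt : K'' < K' := by
    have := (ENNReal.ofReal_lt_ofReal_iff_of_nonneg hK''pos.le).mp h4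
    exact this
  refine le_trans (lintegral_mono fun ω => ?_) hcond
  apply ENNReal.ofReal_le_ofReal
  apply Real.exp_le_exp.mpr
  apply div_le_div_of_nonneg_left (Finset.sum_nonneg fun i _ => sq_nonneg _)
    (pow_pos hK''pos 2)
  exact pow_le_pow_left₀ hK''pos.le hlt.le 2

lemma e2_valid {Ω : Type*} [MeasurableSpace Ω] (μ : Measure Ω) {n : ℕ}
    (ξ : Fin n → Ω → ℝ) (hmeas : ∀ i, Measurable (ξ i)) (hfin : e2Norm μ ξ < ⊤)
    (hK : 0 < (e2Norm μ ξ).toReal) :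
    ∫⁻ ω, ENNReal.ofReal (Real.exp ((∑ i, ξ i ω ^ 2) / (e2Norm μ ξ).toReal ^ 2)) ∂μ ≤ 2 := by
  set K := (e2Norm μ ξ).toReal with hKdef
  set S : Ω → ℝ := fun ω => ∑ i, ξ i ω ^ 2 with hS
  have hSmeas : Measurable S := by
    apply Finset.measurable_sum
    intro i _
    exact (hmeas i).pow_const 2
  have hSnn : ∀ ω, 0 ≤ S ω := fun ω => Finset.sum_nonneg fun i _ => sq_nonneg _
  set f : ℕ → Ω → ℝ≥0∞ := fun m ω =>
    ENNReal.ofReal (Real.exp (S ω / (K + 1 / (m + 1)) ^ 2)) with hf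
  have hKm : ∀ m : ℕ, K < K + 1 / (m + 1 : ℝ) := by
    intro m
    have : (0:ℝ) < 1 / (m + 1 : ℝ) := by positivity
    linarith
  have hfmeas : ∀ m, Measurable (f m) := by
    intro m
    exact (ENNReal.measurable_ofReal.comp
      (Real.measurable_exp.comp (hSmeas.div_const _)))
  have hmono : Monotone f := by
    intro m m' hmm' ω
    apply ENNReal.ofReal_le_ofReal
    apply Real.exp_le_exp.mpr
    apply div_le_div_of_nonneg_left (hSnn ω) (by positivity)
    have h1 : K + 1 / (m' + 1 : ℝ) ≤ K + 1 / (m + 1 : ℝ) := by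
      have : (1 : ℝ) / (m' + 1) ≤ 1 / (m + 1) := by
        apply one_div_le_one_div_of_le (by positivity)
        have : (m:ℝ) ≤ m' := Nat.cast_le.mpr hmm'
        linarith
      linarith
    have h2 : (0:ℝ) < K + 1 / (m' + 1 : ℝ) := lt_trans hK (hKm m')
    exact pow_le_pow_left₀ h2.le h1 2
  have hsup : ∀ ω, (⨆ m, f m ω) = ENNReal.ofReal (Real.exp (S ω / K ^ 2)) := by
    intro ω
    have htend : Filter.Tendsto (fun m : ℕ => f m ω) Filter.atTop
        (nhds (ENNReal.ofReal (Real.exp (S ω / K ^ 2)))) := by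
      have h1 : Filter.Tendsto (fun m : ℕ => K + 1 / (m + 1 : ℝ)) Filter.atTop (nhds K) := by
        have := tendsto_one_div_add_atTop_nhds_zero_nat (𝕜 := ℝ)
        have h2 := Filter.Tendsto.const_add K this
        simpa using h2
      have hcont : ContinuousAt (fun k : ℝ => ENNReal.ofReal (Real.exp (S ω / k ^ 2))) K := by
        apply ENNReal.continuous_ofReal.continuousAt.comp
        apply Real.continuous_exp.continuousAt.comp
        exact (continuousAt_const.div (continuousAt_pow _ _) (by positivity))
      exact hcont.tendsto.comp h1
    exact (tendsto_nhds_unique (tendsto_atTop_iSup fun m m' h => hmono h ω) htend)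
  calc ∫⁻ ω, ENNReal.ofReal (Real.exp (S ω / K ^ 2)) ∂μ
      = ∫⁻ ω, ⨆ m, f m ω ∂μ := by simp_rw [hsup]
    _ = ⨆ m, ∫⁻ ω, f m ω ∂μ := lintegral_iSup hfmeas fun m m' h => fun ω => hmono h ω
    _ ≤ 2 := iSup_le fun m => e2_valid_gt μ ξ hfin (hKm m)

lemma psi1_le {Ω : Type*} [MeasurableSpace Ω] (μ : Measure Ω) (η : Ω → ℝ) {B : ℝ}
    (hB : 0 < B) (h : ∫⁻ ω, ENNReal.ofReal (Real.exp (|η ω / B|)) ∂μ ≤ 2) :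
    psi1Norm μ η ≤ ENNReal.ofReal B := by
  rw [psi1Norm]
  exact iInf_le_of_le B (iInf_le_of_le hB (iInf_le_of_le h le_rfl))

lemma chernoff_one {Ω : Type*} [MeasurableSpace Ω] (μ : Measure Ω)
    [IsProbabilityMeasure μ] (η : Ω → ℝ) (hmeas : Measurable η) (t l c : ℝ)
    (hl : 0 ≤ l)
    (hmgf : ∫⁻ ω, ENNReal.ofReal (Real.exp (l * η ω)) ∂μ ≤ ENNReal.ofReal (Real.exp c)) :
    μ {ω | t ≤ η ω} ≤ ENNReal.ofReal (Real.exp (c - l * t)) := by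
  set f : Ω → ℝ≥0∞ := fun ω => ENNReal.ofReal (Real.exp (l * η ω)) with hfdef
  have hfm : AEMeasurable f μ :=
    (ENNReal.measurable_ofReal.comp (Real.measurable_exp.comp (hmeas.const_mul l))).aemeasurable
  set ε : ℝ≥0∞ := ENNReal.ofReal (Real.exp (l * t)) with hεdef
  have hsub : {ω | t ≤ η ω} ⊆ {ω | ε ≤ f ω} := by
    intro ω hω
    exact ENNReal.ofReal_le_ofReal (Real.exp_le_exp.mpr (mul_le_mul_of_nonneg_left hω hl))
  have hcheb := mul_meas_ge_le_lintegral₀ hfm ε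
  have hεne0 : ε ≠ 0 := by
    simp [hεdef, ENNReal.ofReal_eq_zero, not_le, Real.exp_pos]
  have hεnetop : ε ≠ ⊤ := ENNReal.ofReal_ne_top
  have h1 : μ {ω | t ≤ η ω} ≤ μ {ω | ε ≤ f ω} := measure_mono hsub
  have h2 : μ {ω | ε ≤ f ω} ≤ ENNReal.ofReal (Real.exp c) / ε := by
    rw [ENNReal.le_div_iff_mul_le (Or.inl hεne0) (Or.inl hεnetop), mul_comm]
    exact le_trans hcheb hmgf
  refine le_trans (le_trans h1 h2) ?_
  rw [hεdef, ← ENNReal.ofReal_div_of_pos (Real.exp_pos _), ← Real.exp_sub]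

lemma opt_lambda (C B t : ℝ) (hC : 0 < C) (hB : 0 < B) (ht : 0 < t) :
    ∃ l : ℝ, 0 ≤ l ∧ C * B * l ≤ 1 ∧
      min (t ^ 2 / (4 * C ^ 2 * B ^ 2)) (t / (2 * C * B)) ≤ l * t - C ^ 2 * B ^ 2 * l ^ 2 := by
  by_cases h : t ≤ 2 * C * B
  · refine ⟨t / (2 * C ^ 2 * B ^ 2), by positivity, ?_, ?_⟩
    · have he : C * B * (t / (2 * C ^ 2 * B ^ 2)) = t / (2 * C * B) := by
        field_simp
      rw [he, div_le_one (by positivity)]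
      exact h
    · refine le_trans (min_le_left _ _) ?_
      have : t / (2 * C ^ 2 * B ^ 2) * t - C ^ 2 * B ^ 2 * (t / (2 * C ^ 2 * B ^ 2)) ^ 2
          = t ^ 2 / (4 * C ^ 2 * B ^ 2) := by
        field_simp
        ring
      rw [this]
  · push_neg at h
    refine ⟨1 / (C * B), by positivity, by field_simp; exact le_rfl, ?_⟩
    refine le_trans (min_le_right _ _) ?_
    have h1 : 1 / (C * B) * t - C ^ 2 * B ^ 2 * (1 / (C * B)) ^ 2 = t / (C * B) - 1 := by
      field_simp
    rw [h1]
    have h2 : (1:ℝ) ≤ t / (2 * C * B) := by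
      rw [le_div_iff₀ (by positivity)]
      linarith
    have h3 : t / (2 * C * B) = t / (C * B) / 2 := by ring
    linarith [h2, h3 ▸ h2]

lemma half_exp_lintegral {Ω : Type*} [MeasurableSpace Ω] (μ : Measure Ω)
    [IsProbabilityMeasure μ] (u : Ω → ℝ) (hu : Measurable u) :
    ∫⁻ ω, ENNReal.ofReal (Real.exp (u ω / 2)) ∂μ ≤
      (∫⁻ ω, ENNReal.ofReal (Real.exp (u ω)) ∂μ) ^ ((1:ℝ)/2) := by
  have hpq : Real.HolderConjugate 2 2 := by
    constructor <;> norm_num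
  set f : Ω → ℝ≥0∞ := fun ω => ENNReal.ofReal (Real.exp (u ω / 2)) with hf
  have hfm : AEMeasurable f μ :=
    (ENNReal.measurable_ofReal.comp (Real.measurable_exp.comp (hu.div_const 2))).aemeasurable
  have h := ENNReal.lintegral_mul_le_Lp_mul_Lq μ hpq hfm aemeasurable_const (g := fun _ => 1)
  simp only [mul_one, Pi.mul_apply] at h
  have h1 : ∫⁻ (a : Ω), (1:ℝ≥0∞) ^ (2:ℝ) ∂μ = 1 := by simp
  rw [h1] at h
  simp only [ENNReal.one_rpow, mul_one] at h
  refine le_trans h (le_of_eq ?_)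
  congr 1
  refine lintegral_congr fun ω => ?_
  show ENNReal.ofReal (Real.exp (u ω / 2)) ^ (2:ℝ) = ENNReal.ofReal (Real.exp (u ω))
  rw [ENNReal.ofReal_rpow_of_pos (Real.exp_pos _), ← Real.exp_mul]
  norm_num

lemma integrable_of_lint {Ω : Type*} [MeasurableSpace Ω] (μ : Measure Ω) (f : Ω → ℝ)
    (hm : Measurable f) (hnn : ∀ ω, 0 ≤ f ω)
    (h : ∫⁻ ω, ENNReal.ofReal (f ω) ∂μ ≤ 2) : Integrable f μ := by
  refine ⟨hm.aestronglyMeasurable, ?_⟩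
  rw [hasFiniteIntegral_iff_ofReal (Filter.Eventually.of_forall hnn)]
  exact lt_of_le_of_lt h (by norm_num)

lemma integral_le_of_lint {Ω : Type*} [MeasurableSpace Ω] (μ : Measure Ω) (f : Ω → ℝ)
    (hm : Measurable f) (hnn : ∀ ω, 0 ≤ f ω)
    (h : ∫⁻ ω, ENNReal.ofReal (f ω) ∂μ ≤ 2) : ∫ ω, f ω ∂μ ≤ 2 := by
  rw [integral_eq_lintegral_of_nonneg_ae (Filter.Eventually.of_forall hnn)
    hm.aestronglyMeasurable]
  calc (∫⁻ ω, ENNReal.ofReal (f ω) ∂μ).toReal ≤ (2 : ℝ≥0∞).toReal :=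
        ENNReal.toReal_mono (by norm_num) h
    _ = 2 := by norm_num

/-- (Hanson–Wright-type inequality.) Let `A` be an `n×n` real matrix with
operator norm `‖A‖`, `ξ` a random vector with `K = ‖ξ‖_{E_2} < ∞`, and `C > 0` a constant
such that every centered random variable `η` with finite ψ_1-norm satisfies
`E exp(tη) ≤ exp(C²‖η‖_{ψ_1}²t²)` for `|t| ≤ 1/(C‖η‖_{ψ_1})`. Then for every `t ≥ 0`,
`P(|ξᵀAξ - E(ξᵀAξ)| ≥ t) ≤ 2 exp(-min{t²/(16C²‖A‖²K⁴), t/(4C‖A‖K²)})`. -/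
theorem hanson_wright {Ω : Type u} [MeasurableSpace Ω] (μ : Measure Ω)
    [IsProbabilityMeasure μ] (n : ℕ) (A : Matrix (Fin n) (Fin n) ℝ)
    (ξ : Fin n → Ω → ℝ) (hmeas : ∀ i, Measurable (ξ i))
    (hfin : e2Norm μ ξ < ⊤)
    (C : ℝ) (hC : 0 < C)
    (hCprop : ∀ (Ω' : Type u) [MeasurableSpace Ω'] (μ' : Measure Ω')
      [IsProbabilityMeasure μ'] (η : Ω' → ℝ), Measurable η → Integrable η μ' →
      (∫ ω, η ω ∂μ') = 0 → psi1Norm μ' η < ⊤ →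
      ∀ t : ℝ, C * (psi1Norm μ' η).toReal * |t| ≤ 1 →
        ∫⁻ ω, ENNReal.ofReal (Real.exp (t * η ω)) ∂μ' ≤
          ENNReal.ofReal (Real.exp (C ^ 2 * (psi1Norm μ' η).toReal ^ 2 * t ^ 2)))
    (t : ℝ) (ht : 0 ≤ t) :
    μ {ω | t ≤ |(∑ i, ∑ j, A i j * ξ i ω * ξ j ω) -
        ∫ ω', ∑ i, ∑ j, A i j * ξ i ω' * ξ j ω' ∂μ|} ≤
      ENNReal.ofReal (2 * Real.exp
        (-min (t ^ 2 / (16 * C ^ 2 * matOpNorm A ^ 2 * (e2Norm μ ξ).toReal ^ 4))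
              (t / (4 * C * matOpNorm A * (e2Norm μ ξ).toReal ^ 2)))) := by
  classical
  set a := matOpNorm A with ha_def
  set K := (e2Norm μ ξ).toReal with hK_def
  set M := min (t ^ 2 / (16 * C ^ 2 * a ^ 2 * K ^ 4)) (t / (4 * C * a * K ^ 2)) with hM_def
  by_cases hMpos : 0 < M
  swap
  · push_neg at hMpos
    refine le_trans (measure_mono (Set.subset_univ _)) ?_
    rw [measure_univ, ENNReal.one_le_ofReal]
    have h1 : (1:ℝ) ≤ Real.exp (-M) := Real.one_le_exp (by linarith)
    linarith
  · -- positivity facts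
    have ht0 : 0 < t := by
      rcases lt_or_eq_of_le ht with h | h
      · exact h
      · exfalso
        rw [hM_def, ← h] at hMpos
        simp at hMpos
    have hd2 : 0 < t / (4 * C * a * K ^ 2) := lt_of_lt_of_le hMpos (min_le_right _ _)
    have hden : 0 < 4 * C * a * K ^ 2 := by
      by_contra hle
      push_neg at hle
      have : t / (4 * C * a * K ^ 2) ≤ 0 :=
        div_nonpos_of_nonneg_of_nonpos ht0.le hle
      linarith
    have haK : 0 < a * K ^ 2 := by nlinarith
    have hKnn : (0:ℝ) ≤ K := ENNReal.toReal_nonneg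
    have hK0 : 0 < K := by
      rcases lt_or_eq_of_le hKnn with h | h
      · exact h
      · exfalso; rw [← h] at haK; simp at haK
    have ha0 : 0 < a := by nlinarith [pow_pos hK0 2]
    -- definitions
    set S : Ω → ℝ := fun ω => ∑ i, ξ i ω ^ 2 with hS_def
    set X : Ω → ℝ := fun ω => ∑ i, ∑ j, A i j * ξ i ω * ξ j ω with hX_def
    have hXmeas : Measurable X := by
      apply Finset.measurable_sum
      intro i _
      apply Finset.measurable_sum
      intro j _
      exact (measurable_const.mul (hmeas i)).mul (hmeas j)
    have hSnn : ∀ ω, 0 ≤ S ω := fun ω => Finset.sum_nonneg fun i _ => sq_nonneg _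
    have hXb : ∀ ω, |X ω| ≤ a * S ω := fun ω => quad_bound A (fun i => ξ i ω)
    have hE2 : ∫⁻ ω, ENNReal.ofReal (Real.exp (S ω / K ^ 2)) ∂μ ≤ 2 :=
      e2_valid μ ξ hmeas hfin hK0
    set B0 : ℝ := a * K ^ 2 with hB0_def
    have hB0pos : 0 < B0 := haK
    set g : Ω → ℝ := fun ω => |X ω| / B0 with hg_def
    have hgnn : ∀ ω, 0 ≤ g ω := fun ω => div_nonneg (abs_nonneg _) hB0pos.le
    have hgB : ∀ ω, |X ω| = B0 * g ω := by
      intro ω; rw [hg_def]; field_simp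
    have hgb : ∀ ω, g ω ≤ S ω / K ^ 2 := by
      intro ω
      rw [hg_def]
      show |X ω| / B0 ≤ S ω / K ^ 2
      rw [div_le_div_iff₀ hB0pos (pow_pos hK0 2)]
      calc |X ω| * K ^ 2 ≤ (a * S ω) * K ^ 2 :=
            mul_le_mul_of_nonneg_right (hXb ω) (pow_pos hK0 2).le
        _ = S ω * B0 := by rw [hB0_def]; ring
    have hgmeas : Measurable g := hXmeas.abs.div_const _
    have hexpg_lint : ∫⁻ ω, ENNReal.ofReal (Real.exp (g ω)) ∂μ ≤ 2 :=
      le_trans (lintegral_mono fun ω =>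
        ENNReal.ofReal_le_ofReal (Real.exp_le_exp.mpr (hgb ω))) hE2
    have hexpg_int : Integrable (fun ω => Real.exp (g ω)) μ :=
      integrable_of_lint μ _ (Real.measurable_exp.comp hgmeas)
        (fun ω => (Real.exp_pos _).le) hexpg_lint
    have hg_int : Integrable g μ := by
      refine hexpg_int.mono hgmeas.aestronglyMeasurable (Filter.Eventually.of_forall fun ω => ?_)
      rw [Real.norm_eq_abs, Real.norm_eq_abs, abs_of_nonneg (hgnn ω),
        abs_of_nonneg (Real.exp_pos _).le]
      linarith [Real.add_one_le_exp (g ω)]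
    have hX_int : Integrable X μ := by
      refine (hg_int.const_mul B0).mono hXmeas.aestronglyMeasurable
        (Filter.Eventually.of_forall fun ω => ?_)
      rw [Real.norm_eq_abs, Real.norm_eq_abs, hgB ω, abs_of_nonneg
        (mul_nonneg hB0pos.le (hgnn ω))]
    set m : ℝ := ∫ ω', X ω' ∂μ with hm_def
    -- Jensen
    have hint_expg : ∫ ω, Real.exp (g ω) ∂μ ≤ 2 :=
      integral_le_of_lint μ _ (Real.measurable_exp.comp hgmeas)
        (fun ω => (Real.exp_pos _).le) hexpg_lint
    have hjensen : Real.exp (∫ ω, g ω ∂μ) ≤ ∫ ω, Real.exp (g ω) ∂μ := by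
      have := convexOn_exp.map_integral_le (μ := μ) (f := g)
        Real.continuous_exp.continuousOn isClosed_univ
        (Filter.Eventually.of_forall fun _ => Set.mem_univ _) hg_int
        hexpg_int
      exact this
    have hEg : ∫ ω, g ω ∂μ ≤ Real.log 2 := by
      rw [Real.le_log_iff_exp_le (by norm_num : (0:ℝ) < 2)]
      exact le_trans hjensen hint_expg
    have hm_bound : |m| ≤ B0 * Real.log 2 := by
      have h1 : |m| ≤ ∫ ω, |X ω| ∂μ := by
        rw [hm_def]
        calc |∫ ω', X ω' ∂μ| = ‖∫ ω', X ω' ∂μ‖ := (Real.norm_eq_abs _).symm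
          _ ≤ ∫ ω', ‖X ω'‖ ∂μ := norm_integral_le_integral_norm _
          _ = ∫ ω, |X ω| ∂μ := by simp [Real.norm_eq_abs]
      have h2 : ∫ ω, |X ω| ∂μ = B0 * ∫ ω, g ω ∂μ := by
        rw [← integral_const_mul]
        exact integral_congr_ae (Filter.Eventually.of_forall fun ω => hgB ω)
      calc |m| ≤ ∫ ω, |X ω| ∂μ := h1
        _ = B0 * ∫ ω, g ω ∂μ := h2
        _ ≤ B0 * Real.log 2 := mul_le_mul_of_nonneg_left hEg hB0pos.le
    set B1 : ℝ := 2 * B0 with hB1_def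
    have hB1pos : 0 < B1 := by positivity
    set η : Ω → ℝ := fun ω => X ω - m with hη_def
    -- psi1 bound for η
    have hψlint : ∫⁻ ω, ENNReal.ofReal (Real.exp (|η ω / B1|)) ∂μ ≤ 2 := by
      have key : ∀ ω, Real.exp (|η ω / B1|) ≤
          Real.exp (Real.log 2 / 2) * Real.exp (g ω / 2) := by
        intro ω
        rw [← Real.exp_add]
        apply Real.exp_le_exp.mpr
        rw [abs_div, abs_of_pos hB1pos]
        have habs : |η ω| ≤ |X ω| + |m| := by
          rw [hη_def]
          calc |X ω - m| = ‖X ω - m‖ := (Real.norm_eq_abs _).symm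
            _ ≤ ‖X ω‖ + ‖m‖ := norm_sub_le _ _
            _ = |X ω| + |m| := by simp [Real.norm_eq_abs]
        rw [div_le_iff₀ hB1pos]
        have h3 : (Real.log 2 / 2 + g ω / 2) * B1 = B0 * Real.log 2 + B0 * g ω := by
          rw [hB1_def]; ring
        rw [h3, ← hgB ω]
        linarith [hm_bound]
      calc ∫⁻ ω, ENNReal.ofReal (Real.exp (|η ω / B1|)) ∂μ
          ≤ ∫⁻ ω, ENNReal.ofReal (Real.exp (Real.log 2 / 2)) *
              ENNReal.ofReal (Real.exp (g ω / 2)) ∂μ := by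
            refine lintegral_mono fun ω => ?_
            rw [← ENNReal.ofReal_mul (Real.exp_pos _).le]
            exact ENNReal.ofReal_le_ofReal (key ω)
        _ = ENNReal.ofReal (Real.exp (Real.log 2 / 2)) *
              ∫⁻ ω, ENNReal.ofReal (Real.exp (g ω / 2)) ∂μ :=
            lintegral_const_mul _ (ENNReal.measurable_ofReal.comp
              (Real.measurable_exp.comp (hgmeas.div_const 2)))
        _ ≤ ENNReal.ofReal (Real.exp (Real.log 2 / 2)) * (2 : ℝ≥0∞) ^ ((1:ℝ)/2) := by
            apply mul_le_mul_right
            refine le_trans (half_exp_lintegral μ g hgmeas) ?_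
            exact ENNReal.rpow_le_rpow hexpg_lint (by norm_num)
        _ = 2 := by
            have h4 : Real.exp (Real.log 2 / 2) = Real.sqrt 2 := by
              rw [Real.sqrt_eq_rpow, Real.rpow_def_of_pos (by norm_num : (0:ℝ) < 2)]
              ring_nf
            have h5 : (2 : ℝ≥0∞) ^ ((1:ℝ)/2) = ENNReal.ofReal (Real.sqrt 2) := by
              rw [show (2:ℝ≥0∞) = ENNReal.ofReal 2 by norm_num,
                ENNReal.ofReal_rpow_of_pos (by norm_num : (0:ℝ) < 2),
                ← Real.sqrt_eq_rpow]
            rw [h4, h5, ← ENNReal.ofReal_mul (Real.sqrt_nonneg 2),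
              Real.mul_self_sqrt (by norm_num : (0:ℝ) ≤ 2)]
            norm_num
    have hψ : psi1Norm μ η ≤ ENNReal.ofReal B1 := psi1_le μ η hB1pos hψlint
    have hψfin : psi1Norm μ η < ⊤ := lt_of_le_of_lt hψ ENNReal.ofReal_lt_top
    have hBnn : 0 ≤ (psi1Norm μ η).toReal := ENNReal.toReal_nonneg
    have hBle : (psi1Norm μ η).toReal ≤ B1 := by
      calc (psi1Norm μ η).toReal ≤ (ENNReal.ofReal B1).toReal :=
            ENNReal.toReal_mono ENNReal.ofReal_ne_top hψ
        _ = B1 := ENNReal.toReal_ofReal hB1pos.le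
    have hηmeas : Measurable η := hXmeas.sub measurable_const
    have hη_int : Integrable η μ := hX_int.sub (integrable_const m)
    have hηzero : ∫ ω, η ω ∂μ = 0 := by
      rw [hη_def]
      rw [integral_sub hX_int (integrable_const m), integral_const]
      simp [hm_def]
    obtain ⟨l, hl0, hlle, hlopt⟩ := opt_lambda C B1 t hC hB1pos ht0
    have hmgf : ∀ s : ℝ, |s| = l →
        ∫⁻ ω, ENNReal.ofReal (Real.exp (s * η ω)) ∂μ ≤
          ENNReal.ofReal (Real.exp (C ^ 2 * B1 ^ 2 * l ^ 2)) := by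
      intro s hs
      have hcond : C * (psi1Norm μ η).toReal * |s| ≤ 1 := by
        rw [hs]
        calc C * (psi1Norm μ η).toReal * l ≤ C * B1 * l :=
              mul_le_mul_of_nonneg_right (mul_le_mul_of_nonneg_left hBle hC.le) hl0
          _ ≤ 1 := hlle
      have h1 := hCprop Ω μ η hηmeas hη_int hηzero hψfin s hcond
      refine le_trans h1 (ENNReal.ofReal_le_ofReal (Real.exp_le_exp.mpr ?_))
      have hs2 : s ^ 2 = l ^ 2 := by rw [← sq_abs s, hs]
      rw [hs2]
      have hb2 : (psi1Norm μ η).toReal ^ 2 ≤ B1 ^ 2 := pow_le_pow_left₀ hBnn hBle 2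
      exact mul_le_mul_of_nonneg_right
        (mul_le_mul_of_nonneg_left hb2 (sq_nonneg C)) (sq_nonneg l)
    have hexp_bound : Real.exp (C ^ 2 * B1 ^ 2 * l ^ 2 - l * t) ≤ Real.exp (-M) := by
      apply Real.exp_le_exp.mpr
      have e1 : 16 * C ^ 2 * a ^ 2 * K ^ 4 = 4 * C ^ 2 * B1 ^ 2 := by
        rw [hB1_def, hB0_def]; ring
      have e2 : 4 * C * a * K ^ 2 = 2 * C * B1 := by
        rw [hB1_def, hB0_def]; ring
      have hMeq : M = min (t ^ 2 / (4 * C ^ 2 * B1 ^ 2)) (t / (2 * C * B1)) := by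
        rw [hM_def, e1, e2]
      rw [hMeq]
      linarith [hlopt]
    have hup : μ {ω | t ≤ η ω} ≤ ENNReal.ofReal (Real.exp (-M)) := by
      have h := chernoff_one μ η hηmeas t l (C ^ 2 * B1 ^ 2 * l ^ 2) hl0
        (hmgf l (abs_of_nonneg hl0))
      exact le_trans h (ENNReal.ofReal_le_ofReal hexp_bound)
    have hdown : μ {ω | t ≤ -η ω} ≤ ENNReal.ofReal (Real.exp (-M)) := by
      have hm2 : ∫⁻ ω, ENNReal.ofReal (Real.exp (l * -η ω)) ∂μ ≤
          ENNReal.ofReal (Real.exp (C ^ 2 * B1 ^ 2 * l ^ 2)) := by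
        refine le_trans (le_of_eq ?_) (hmgf (-l) (by rw [abs_neg, abs_of_nonneg hl0]))
        refine lintegral_congr fun ω => ?_
        congr 1
        ring_nf
      have h := chernoff_one μ (fun ω => -η ω) hηmeas.neg t l
        (C ^ 2 * B1 ^ 2 * l ^ 2) hl0 hm2
      exact le_trans h (ENNReal.ofReal_le_ofReal hexp_bound)
    show μ {ω | t ≤ |η ω|} ≤ ENNReal.ofReal (2 * Real.exp (-M))
    calc μ {ω | t ≤ |η ω|}
        ≤ μ ({ω | t ≤ η ω} ∪ {ω | t ≤ -η ω}) := by
          apply measure_mono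
          intro ω hω
          rcases le_abs.mp (Set.mem_setOf_eq ▸ hω) with h | h
          · exact Or.inl h
          · exact Or.inr h
      _ ≤ μ {ω | t ≤ η ω} + μ {ω | t ≤ -η ω} := measure_union_le _ _
      _ ≤ ENNReal.ofReal (Real.exp (-M)) + ENNReal.ofReal (Real.exp (-M)) :=
          add_le_add hup hdown
      _ = ENNReal.ofReal (2 * Real.exp (-M)) := by
          rw [← ENNReal.ofReal_add (Real.exp_pos _).le (Real.exp_pos _).le]
          congr 1
          ring
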